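/- Let φ be an LTL formula and w an infinite word. Let G be the set of G-subformulas Gψ of φ such that w ⊨ FGψ. For each Gψ ∈ G let ind(w,ψ) be the smallest index j with w_j ⊨ Gψ. Then: for every i ∈ ℕ, the conjunction of afG(φ, w[0..i]) together with ⋀_{Gψ∈G}(Gψ ∧ ⋀_{j=0}^{i} afG(ψ, w[j..i])) together with ⋀_{Gψ∈ GG(φ)\G} ¬Gψ propositionally implies af(φ, w[0..i]). -/
import Mathlib


namespace LTLF

/-- LTL formulas in negation normal form over atomic propositions `Ap`. -/
inductive LTL (Ap : Type) : Type
  | tt : LTL Ap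
  | ff : LTL Ap
  | atom : Ap → LTL Ap
  | natom : Ap → LTL Ap
  | and : LTL Ap → LTL Ap → LTL Ap
  | or : LTL Ap → LTL Ap → LTL Ap
  | next : LTL Ap → LTL Ap
  | fut : LTL Ap → LTL Ap
  | glob : LTL Ap → LTL Ap
  | untl : LTL Ap → LTL Ap → LTL Ap

variable {Ap : Type}

/-- Infinite words over the alphabet `2^Ap`. -/
abbrev Word (Ap : Type) := ℕ → Set Ap

/-- The suffix `w_k`. -/
def suffix (w : Word Ap) (k : ℕ) : Word Ap := fun i => w (i + k)

/-- Standard LTL semantics on infinite words. -/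
def Sat : LTL Ap → Word Ap → Prop
  | .tt, _ => True
  | .ff, _ => False
  | .atom a, w => a ∈ w 0
  | .natom a, w => a ∉ w 0
  | .and φ ψ, w => Sat φ w ∧ Sat ψ w
  | .or φ ψ, w => Sat φ w ∨ Sat ψ w
  | .next φ, w => Sat φ (suffix w 1)
  | .fut φ, w => ∃ k, Sat φ (suffix w k)
  | .glob φ, w => ∀ k, Sat φ (suffix w k)
  | .untl φ ψ, w => ∃ k, Sat ψ (suffix w k) ∧ ∀ j < k, Sat φ (suffix w j)

open Classical in
/-- The "after function" `af(φ, ν)`. -/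
noncomputable def af : LTL Ap → Set Ap → LTL Ap
  | .tt, _ => .tt
  | .ff, _ => .ff
  | .atom a, ν => if a ∈ ν then .tt else .ff
  | .natom a, ν => if a ∈ ν then .ff else .tt
  | .and φ ψ, ν => .and (af φ ν) (af ψ ν)
  | .or φ ψ, ν => .or (af φ ν) (af ψ ν)
  | .next φ, _ => φ
  | .fut φ, ν => .or (af φ ν) (.fut φ)
  | .glob φ, ν => .and (af φ ν) (.glob φ)
  | .untl φ ψ, ν => .or (af ψ ν) (.and (af φ ν) (.untl φ ψ))

/-- `af` extended to finite words. -/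
noncomputable def afw (φ : LTL Ap) (u : List (Set Ap)) : LTL Ap := u.foldl af φ

open Classical in
/-- The variant `afG`, identical to `af` except `afG(Gφ, ν) = Gφ`. -/
noncomputable def afG : LTL Ap → Set Ap → LTL Ap
  | .tt, _ => .tt
  | .ff, _ => .ff
  | .atom a, ν => if a ∈ ν then .tt else .ff
  | .natom a, ν => if a ∈ ν then .ff else .tt
  | .and φ ψ, ν => .and (afG φ ν) (afG ψ ν)
  | .or φ ψ, ν => .or (afG φ ν) (afG ψ ν)
  | .next φ, _ => φ
  | .fut φ, ν => .or (afG φ ν) (.fut φ)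
  | .glob φ, _ => .glob φ
  | .untl φ ψ, ν => .or (afG ψ ν) (.and (afG φ ν) (.untl φ ψ))

/-- `afG` extended to finite words. -/
noncomputable def afGw (φ : LTL Ap) (u : List (Set Ap)) : LTL Ap := u.foldl afG φ

/-- The finite infix `w[i..j] = w[i] w[i+1] ⋯ w[j]`. -/
def infixW (w : Word Ap) (i j : ℕ) : List (Set Ap) :=
  (List.range (j + 1 - i)).map (fun k => w (i + k))

/-- The finite prefix `w[0..i]`. -/
def prefixW (w : Word Ap) (i : ℕ) : List (Set Ap) := infixW w 0 i

/-- Concatenation of a finite word with an infinite word. -/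
def cat (u : List (Set Ap)) (w : Word Ap) : Word Ap :=
  fun k => if h : k < u.length then u.get ⟨k, h⟩ else w (k - u.length)

/-- Propositional evaluation of a formula under a valuation `v`, treating
literals and temporal formulas (`X`, `F`, `G`, `U`) as opaque propositional atoms. -/
def propSat (v : LTL Ap → Prop) : LTL Ap → Prop
  | .tt => True
  | .ff => False
  | .and φ ψ => propSat v φ ∧ propSat v ψ
  | .or φ ψ => propSat v φ ∨ propSat v ψ
  | φ => v φ

/-- A valuation is consistent on literals: `a` and `¬a` get complementary values. -/
def LitConsistent (v : LTL Ap → Prop) : Prop :=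
  ∀ a : Ap, v (.atom a) ↔ ¬ v (.natom a)

/-- Propositional implication `φ ⊨_p ψ`. -/
def PropImp (φ ψ : LTL Ap) : Prop :=
  ∀ v : LTL Ap → Prop, LitConsistent v → propSat v φ → propSat v ψ

/-- Propositional equivalence `φ ≡_p ψ`. -/
def PropEquiv (φ ψ : LTL Ap) : Prop :=
  ∀ v : LTL Ap → Prop, LitConsistent v → (propSat v φ ↔ propSat v ψ)

/-- `⋀_{χ ∈ H} χ ⊨_p ψ` : the (possibly infinite) conjunction of the
hypotheses `H` propositionally implies `ψ`. -/
def PropImpSet (H : Set (LTL Ap)) (ψ : LTL Ap) : Prop :=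
  ∀ v : LTL Ap → Prop, LitConsistent v → (∀ χ ∈ H, propSat v χ) → propSat v ψ

/-- The list of subformulas of a formula. -/
def subfs : LTL Ap → List (LTL Ap)
  | .tt => [.tt]
  | .ff => [.ff]
  | .atom a => [.atom a]
  | .natom a => [.natom a]
  | .and φ ψ => .and φ ψ :: (subfs φ ++ subfs ψ)
  | .or φ ψ => .or φ ψ :: (subfs φ ++ subfs ψ)
  | .next φ => .next φ :: subfs φ
  | .fut φ => .fut φ :: subfs φ
  | .glob φ => .glob φ :: subfs φ
  | .untl φ ψ => .untl φ ψ :: (subfs φ ++ subfs ψ)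

/-- `Gψ` is a `G`-subformula of `φ`. -/
def GSub (φ ψ : LTL Ap) : Prop := LTL.glob ψ ∈ subfs φ

/-- A formula is `G`-free if it contains no occurrence of `G`. -/
def GFree : LTL Ap → Prop
  | .glob _ => False
  | .and φ ψ => GFree φ ∧ GFree ψ
  | .or φ ψ => GFree φ ∧ GFree ψ
  | .next φ => GFree φ
  | .fut φ => GFree φ
  | .untl φ ψ => GFree φ ∧ GFree ψ
  | _ => True

/-- `ind(w, ψ)`: the least index `j` with `w_j ⊨ Gψ`. -/
noncomputable def ind (w : Word Ap) (ψ : LTL Ap) : ℕ :=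
  sInf {j | Sat (.glob ψ) (suffix w j)}

/-! ### Auxiliary lemmas -/

@[simp] lemma afw_nil (φ : LTL Ap) : afw φ [] = φ := rfl
@[simp] lemma afw_cons (φ : LTL Ap) (ν : Set Ap) (u : List (Set Ap)) :
    afw φ (ν :: u) = afw (af φ ν) u := rfl
@[simp] lemma afGw_nil (φ : LTL Ap) : afGw φ [] = φ := rfl
@[simp] lemma afGw_cons (φ : LTL Ap) (ν : Set Ap) (u : List (Set Ap)) :
    afGw φ (ν :: u) = afGw (afG φ ν) u := rfl

lemma afw_tt (u : List (Set Ap)) : afw .tt u = .tt := by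
  induction u with
  | nil => rfl
  | cons ν u ih => exact ih

lemma afw_ff (u : List (Set Ap)) : afw .ff u = .ff := by
  induction u with
  | nil => rfl
  | cons ν u ih => exact ih

lemma afGw_tt (u : List (Set Ap)) : afGw .tt u = .tt := by
  induction u with
  | nil => rfl
  | cons ν u ih => exact ih

lemma afGw_ff (u : List (Set Ap)) : afGw .ff u = .ff := by
  induction u with
  | nil => rfl
  | cons ν u ih => exact ih

lemma afw_and (u : List (Set Ap)) : ∀ φ ψ : LTL Ap,
    afw (.and φ ψ) u = .and (afw φ u) (afw ψ u) := by
  induction u with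
  | nil => intro φ ψ; rfl
  | cons ν u ih => intro φ ψ; exact ih (af φ ν) (af ψ ν)

lemma afw_or (u : List (Set Ap)) : ∀ φ ψ : LTL Ap,
    afw (.or φ ψ) u = .or (afw φ u) (afw ψ u) := by
  induction u with
  | nil => intro φ ψ; rfl
  | cons ν u ih => intro φ ψ; exact ih (af φ ν) (af ψ ν)

lemma afGw_and (u : List (Set Ap)) : ∀ φ ψ : LTL Ap,
    afGw (.and φ ψ) u = .and (afGw φ u) (afGw ψ u) := by
  induction u with
  | nil => intro φ ψ; rfl
  | cons ν u ih => intro φ ψ; exact ih (afG φ ν) (afG ψ ν)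

lemma afGw_or (u : List (Set Ap)) : ∀ φ ψ : LTL Ap,
    afGw (.or φ ψ) u = .or (afGw φ u) (afGw ψ u) := by
  induction u with
  | nil => intro φ ψ; rfl
  | cons ν u ih => intro φ ψ; exact ih (afG φ ν) (afG ψ ν)

lemma afGw_glob (φ : LTL Ap) (u : List (Set Ap)) : afGw (.glob φ) u = .glob φ := by
  induction u with
  | nil => rfl
  | cons ν u ih => exact ih

lemma afw_atom (a : Ap) (u : List (Set Ap)) : afw (.atom a) u = afGw (.atom a) u := by
  cases u with
  | nil => rfl
  | cons ν u =>
    by_cases h : a ∈ ν <;>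
      simp [af, afG, h, afw_tt, afGw_tt, afw_ff, afGw_ff]

lemma afw_natom (a : Ap) (u : List (Set Ap)) : afw (.natom a) u = afGw (.natom a) u := by
  cases u with
  | nil => rfl
  | cons ν u =>
    by_cases h : a ∈ ν <;>
      simp [af, afG, h, afw_tt, afGw_tt, afw_ff, afGw_ff]

lemma infixW_nil (w : Word Ap) {i j : ℕ} (h : i < j) : infixW w j i = [] := by
  have : i + 1 - j = 0 := by omega
  simp [infixW, this]

lemma infixW_cons (w : Word Ap) {i j : ℕ} (h : j ≤ i) :
    infixW w j i = w j :: infixW w (j + 1) i := by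
  unfold infixW
  have h1 : i + 1 - j = (i - j) + 1 := by omega
  have h2 : i + 1 - (j + 1) = i - j := by omega
  rw [h1, h2, List.range_succ_eq_map, List.map_cons, List.map_map]
  simp only [Nat.add_zero, List.cons.injEq, true_and]
  apply List.map_congr_left
  intro k _
  simp only [Function.comp_apply]
  have : j + k.succ = j + 1 + k := by omega
  rw [this]

lemma suffix_infixW (w : Word Ap) (i : ℕ) :
    ∀ d j, i + 1 - j = d → ∀ s : List (Set Ap), s <:+ infixW w j i →
      ∃ j', j ≤ j' ∧ s = infixW w j' i := by
  intro d
  induction d with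
  | zero =>
    intro j hj s hs
    have hnil : infixW w j i = [] := infixW_nil w (by omega)
    rw [hnil] at hs
    have := List.suffix_nil.mp hs
    exact ⟨j, le_rfl, by rw [this, hnil]⟩
  | succ d ih =>
    intro j hj s hs
    have hji : j ≤ i := by omega
    rw [infixW_cons w hji] at hs
    rcases List.suffix_cons_iff.mp hs with h | h
    · exact ⟨j, le_rfl, by rw [h, infixW_cons w hji]⟩
    · have hd : i + 1 - (j + 1) = d := by omega
      obtain ⟨j', hj', hs'⟩ := ih (j + 1) hd s h
      exact ⟨j', by omega, hs'⟩

lemma propSat_globG (v : LTL Ap → Prop) (φ : LTL Ap) :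
    ∀ u : List (Set Ap), v (.glob φ) →
      (∀ s : List (Set Ap), s ≠ [] → s <:+ u → propSat v (afw φ s)) →
      propSat v (afw (.glob φ) u) := by
  intro u
  induction u with
  | nil => intro hv _; exact hv
  | cons ν u ih =>
    intro hv hs
    have h1 : afw (.glob φ) (ν :: u) = .and (afw (af φ ν) u) (afw (.glob φ) u) := by
      rw [afw_cons]
      show afw (.and (af φ ν) (.glob φ)) u = _
      rw [afw_and]
    rw [h1]
    refine ⟨?_, ih hv ?_⟩
    · exact hs (ν :: u) (List.cons_ne_nil ν u) List.suffix_rfl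
    · intro s hne hsuf
      exact hs s hne (hsuf.trans (List.suffix_cons ν u))

lemma main_lemma {Ap : Type} (Φ : LTL Ap) (w : Word Ap) (i : ℕ)
    (v : LTL Ap → Prop)
    (h1 : ∀ ψ : LTL Ap, GSub Φ ψ → Sat (LTL.fut (LTL.glob ψ)) w →
      propSat v (LTL.glob ψ) ∧ ∀ j ≤ i, propSat v (afGw ψ (infixW w j i)))
    (h2 : ∀ ψ : LTL Ap, GSub Φ ψ → ¬ Sat (LTL.fut (LTL.glob ψ)) w →
      ¬ propSat v (LTL.glob ψ)) :
    ∀ (n : ℕ) (φ : LTL Ap) (u : List (Set Ap)), u.length ≤ n →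
      (∀ ψ, GSub φ ψ → GSub Φ ψ) → (∃ j, u = infixW w j i) →
      propSat v (afGw φ u) → propSat v (afw φ u) := by
  intro n
  induction n using Nat.strong_induction_on with
  | _ n IHn =>
  intro φ
  induction φ with
  | tt =>
    intro u _ _ _ _
    rw [afw_tt]
    exact trivial
  | ff =>
    intro u _ _ _ h
    rw [afGw_ff] at h
    exact absurd h (by simp [propSat])
  | atom a =>
    intro u _ _ _ h
    rwa [afw_atom]
  | natom a =>
    intro u _ _ _ h
    rwa [afw_natom]
  | and φ₁ φ₂ ih₁ ih₂ =>
    intro u hlen hclo hinf h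
    rw [afGw_and] at h
    rw [afw_and]
    have hclo₁ : ∀ ψ, GSub φ₁ ψ → GSub Φ ψ := by
      intro ψ hψ; exact hclo ψ (by simp [GSub, subfs] at hψ ⊢; tauto)
    have hclo₂ : ∀ ψ, GSub φ₂ ψ → GSub Φ ψ := by
      intro ψ hψ; exact hclo ψ (by simp [GSub, subfs] at hψ ⊢; tauto)
    exact ⟨ih₁ u hlen hclo₁ hinf h.1, ih₂ u hlen hclo₂ hinf h.2⟩
  | or φ₁ φ₂ ih₁ ih₂ =>
    intro u hlen hclo hinf h
    rw [afGw_or] at h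
    rw [afw_or]
    have hclo₁ : ∀ ψ, GSub φ₁ ψ → GSub Φ ψ := by
      intro ψ hψ; exact hclo ψ (by simp [GSub, subfs] at hψ ⊢; tauto)
    have hclo₂ : ∀ ψ, GSub φ₂ ψ → GSub Φ ψ := by
      intro ψ hψ; exact hclo ψ (by simp [GSub, subfs] at hψ ⊢; tauto)
    rcases h with h | h
    · exact Or.inl (ih₁ u hlen hclo₁ hinf h)
    · exact Or.inr (ih₂ u hlen hclo₂ hinf h)
  | next φ ih =>
    intro u hlen hclo hinf h
    obtain ⟨j, hj⟩ := hinf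
    match u, hj, hlen, h with
    | [], _, _, h => exact h
    | ν :: u', hj, hlen, h =>
      have hji : j ≤ i := by
        by_contra hc
        push_neg at hc
        rw [infixW_nil w hc] at hj
        exact List.cons_ne_nil ν u' hj
      rw [infixW_cons w hji] at hj
      have hu' : u' = infixW w (j + 1) i := by
        injection hj
      have hclo' : ∀ ψ, GSub φ ψ → GSub Φ ψ := by
        intro ψ hψ; exact hclo ψ (by simp [GSub, subfs] at hψ ⊢; tauto)
      exact ih u' (le_trans (by simp) hlen) hclo' ⟨j + 1, hu'⟩ h
  | fut φ ih =>
    intro u hlen hclo hinf h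
    obtain ⟨j, hj⟩ := hinf
    match u, hj, hlen, h with
    | [], _, _, h => exact h
    | ν :: u', hj, hlen, h =>
      have hji : j ≤ i := by
        by_contra hc
        push_neg at hc
        rw [infixW_nil w hc] at hj
        exact List.cons_ne_nil ν u' hj
      rw [infixW_cons w hji] at hj
      have hu' : u' = infixW w (j + 1) i := by injection hj
      have hclo' : ∀ ψ, GSub φ ψ → GSub Φ ψ := by
        intro ψ hψ; exact hclo ψ (by simp [GSub, subfs] at hψ ⊢; tauto)
      have h' : propSat v (afGw (afG φ ν) u') ∨ propSat v (afGw (.fut φ) u') := by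
        have : afGw (.fut φ) (ν :: u') = .or (afGw (afG φ ν) u') (afGw (.fut φ) u') := by
          rw [afGw_cons]
          show afGw (.or (afG φ ν) (.fut φ)) u' = _
          rw [afGw_or]
        rw [this] at h
        exact h
      show propSat v (afw (.or (af φ ν) (.fut φ)) u')
      rw [afw_or]
      rcases h' with h' | h'
      · exact Or.inl (ih (ν :: u') hlen hclo' ⟨j, by rw [infixW_cons w hji]; exact hj⟩ h')
      · refine Or.inr (IHn u'.length ?_ (.fut φ) u' le_rfl hclo ⟨j + 1, hu'⟩ h')
        calc u'.length < (ν :: u').length := by simp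
          _ ≤ n := hlen
  | glob φ ih =>
    intro u hlen hclo hinf h
    rw [afGw_glob] at h
    have hG : GSub Φ φ := hclo φ (by simp [GSub, subfs])
    have hSat : Sat (.fut (.glob φ)) w := by
      by_contra hc
      exact h2 φ hG hc h
    obtain ⟨hvG, hall⟩ := h1 φ hG hSat
    obtain ⟨j, hj⟩ := hinf
    have hclo' : ∀ ψ, GSub φ ψ → GSub Φ ψ := by
      intro ψ hψ; exact hclo ψ (by simp [GSub, subfs] at hψ ⊢; tauto)
    apply propSat_globG v φ u hvG
    intro s hne hsuf
    have hsl : s.length ≤ u.length := hsuf.length_le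
    rw [hj] at hsuf
    obtain ⟨j', _, hsj⟩ := suffix_infixW w i (i + 1 - j) j rfl s hsuf
    have hj'i : j' ≤ i := by
      by_contra hc
      push_neg at hc
      rw [infixW_nil w hc] at hsj
      exact hne hsj
    have hA : propSat v (afGw φ s) := by rw [hsj]; exact hall j' hj'i
    exact ih s (le_trans hsl hlen) hclo' ⟨j', hsj⟩ hA
  | untl φ₁ φ₂ ih₁ ih₂ =>
    intro u hlen hclo hinf h
    obtain ⟨j, hj⟩ := hinf
    match u, hj, hlen, h with
    | [], _, _, h => exact h
    | ν :: u', hj, hlen, h =>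
      have hji : j ≤ i := by
        by_contra hc
        push_neg at hc
        rw [infixW_nil w hc] at hj
        exact List.cons_ne_nil ν u' hj
      rw [infixW_cons w hji] at hj
      have hu' : u' = infixW w (j + 1) i := by injection hj
      have hclo₁ : ∀ ψ, GSub φ₁ ψ → GSub Φ ψ := by
        intro ψ hψ; exact hclo ψ (by simp [GSub, subfs] at hψ ⊢; tauto)
      have hclo₂ : ∀ ψ, GSub φ₂ ψ → GSub Φ ψ := by
        intro ψ hψ; exact hclo ψ (by simp [GSub, subfs] at hψ ⊢; tauto)
      have h' : propSat v (afGw (afG φ₂ ν) u') ∨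
          (propSat v (afGw (afG φ₁ ν) u') ∧ propSat v (afGw (.untl φ₁ φ₂) u')) := by
        have : afGw (.untl φ₁ φ₂) (ν :: u') =
            .or (afGw (afG φ₂ ν) u') (.and (afGw (afG φ₁ ν) u') (afGw (.untl φ₁ φ₂) u')) := by
          rw [afGw_cons]
          show afGw (.or (afG φ₂ ν) (.and (afG φ₁ ν) (.untl φ₁ φ₂))) u' = _
          rw [afGw_or, afGw_and]
        rw [this] at h
        exact h
      show propSat v (afw (.or (af φ₂ ν) (.and (af φ₁ ν) (.untl φ₁ φ₂))) u')
      rw [afw_or, afw_and]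
      have hul : u'.length < n := by
        calc u'.length < (ν :: u').length := by simp
          _ ≤ n := hlen
      rcases h' with h' | ⟨ha, hb⟩
      · exact Or.inl (ih₂ (ν :: u') hlen hclo₂ ⟨j, by rw [infixW_cons w hji]; exact hj⟩ h')
      · refine Or.inr ⟨ih₁ (ν :: u') hlen hclo₁ ⟨j, by rw [infixW_cons w hji]; exact hj⟩ ha, ?_⟩
        exact IHn u'.length hul (.untl φ₁ φ₂) u' le_rfl hclo ⟨j + 1, hu'⟩ hb

/-- for every `i`, the conjunction of `afG(φ, w[0..i])`, of
`Gψ ∧ ⋀_{j=0}^i afG(ψ, w[j..i])` over `Gψ ∈ G`, and of the atoms `¬Gψ` for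
`Gψ ∈ GG(φ)\G` (encoded by forcing `v(Gψ)` to be false) propositionally
implies `af(φ, w[0..i])`. Here `G = {Gψ ∈ GG(φ) | w ⊨ FGψ}`. -/
theorem master_implication_with_afG {Ap : Type} (φ : LTL Ap) (w : Word Ap) (i : ℕ)
    (v : LTL Ap → Prop) (hv : LitConsistent v)
    (h0 : propSat v (afGw φ (prefixW w i)))
    (h1 : ∀ ψ : LTL Ap, GSub φ ψ → Sat (LTL.fut (LTL.glob ψ)) w →
      propSat v (LTL.glob ψ) ∧ ∀ j ≤ i, propSat v (afGw ψ (infixW w j i)))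
    (h2 : ∀ ψ : LTL Ap, GSub φ ψ → ¬ Sat (LTL.fut (LTL.glob ψ)) w →
      ¬ propSat v (LTL.glob ψ)) :
    propSat v (afw φ (prefixW w i)) := by
  exact main_lemma φ w i v h1 h2 (prefixW w i).length φ (prefixW w i) le_rfl
    (fun ψ h => h) ⟨0, rfl⟩ h0

end LTLF
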